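/- Let 0 < q_{l,0} < q_{h,0} ≤ q_h, set ρ = q_{l,0}/q_{h,0}, and define q̂ = 4·q_h − ((4 − ρ)²/(2·(1 − ρ)))·(q_h²/q_{h,0} − √(q_h⁴/q_{h,0}² − (12·(1 − ρ)/(4 − ρ)²)·q_h³/q_{h,0})). Then for every q_l with 0 ≤ q_l ≤ q̂ and q_l < q_h, one has U_h(q_l, q_h) ≥ U_h(q_{l,0}, q_{h,0}). -/

import Mathlib

/-- High-quality firm's equilibrium utility. -/
noncomputable def Uh (ql qh : ℝ) : ℝ := 4 * qh ^ 2 * (qh - ql) / (4 * qh - ql) ^ 2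

/-- with `ρ = q_{l,0}/q_{h,0}` and
`q̂ = 4·q_h − ((4 − ρ)²/(2·(1 − ρ)))·(q_h²/q_{h,0} − √(q_h⁴/q_{h,0}² − (12·(1 − ρ)/(4 − ρ)²)·q_h³/q_{h,0}))`,
any `q_l ∈ [0, q̂]` with `q_l < q_h` keeps the high-quality firm's revenue at
least its initial value. -/
theorem high_firm_no_revenue_loss_threshold
    (ql0 qh0 qh : ℝ) (hql0 : 0 < ql0) (h0 : ql0 < qh0) (hh : qh0 ≤ qh) :
    ∀ ql : ℝ, 0 ≤ ql →
      ql ≤ 4 * qh - ((4 - ql0 / qh0) ^ 2 / (2 * (1 - ql0 / qh0))) *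
        (qh ^ 2 / qh0 - Real.sqrt (qh ^ 4 / qh0 ^ 2 -
          (12 * (1 - ql0 / qh0) / (4 - ql0 / qh0) ^ 2) * qh ^ 3 / qh0)) →
      ql < qh →
      Uh ql qh ≥ Uh ql0 qh0 := by
  intro ql hql hq hlt
  have hb : 0 < qh0 := hql0.trans h0
  have hba : 0 < qh0 - ql0 := by linarith
  have hqh : 0 < qh := lt_of_lt_of_le hb hh
  have hP : 0 < 4 * qh0 - ql0 := by linarith
  have hM : 0 < 2 * qh0 ^ 2 * (qh0 - ql0) := by positivity
  set D : ℝ := qh ^ 4 / qh0 ^ 2 -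
      (12 * (1 - ql0 / qh0) / (4 - ql0 / qh0) ^ 2) * qh ^ 3 / qh0 with hDdef
  have hb' : qh0 ≠ 0 := ne_of_gt hb
  have hP' : (4 : ℝ) - ql0 / qh0 ≠ 0 := by
    have : (4 : ℝ) - ql0 / qh0 = (4 * qh0 - ql0) / qh0 := by field_simp
    rw [this]
    exact div_ne_zero (ne_of_gt hP) hb'
  have hDnum : 0 ≤ qh ^ 4 * (4 * qh0 - ql0) ^ 2 - 12 * (qh0 - ql0) * qh ^ 3 * qh0 ^ 2 := by
    nlinarith [sq_nonneg (2 * qh0 + ql0), mul_pos (mul_pos hqh hqh) hqh,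
      mul_nonneg (sub_nonneg.2 hh) (sq_nonneg (4 * qh0 - ql0)),
      mul_nonneg (mul_nonneg (mul_pos (mul_pos hqh hqh) hqh).le (sub_nonneg.2 hh))
        (sq_nonneg (4 * qh0 - ql0)),
      mul_nonneg (mul_nonneg (mul_pos (mul_pos hqh hqh) hqh).le hb.le)
        (sq_nonneg (2 * qh0 + ql0))]
  have hDeq : D = (qh ^ 4 * (4 * qh0 - ql0) ^ 2 - 12 * (qh0 - ql0) * qh ^ 3 * qh0 ^ 2) /
      (qh0 ^ 2 * (4 * qh0 - ql0) ^ 2) := by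
    rw [hDdef]
    have hP0 : qh0 * 4 - ql0 ≠ 0 := by linarith
    field_simp
  have hD : 0 ≤ D := by
    rw [hDeq]
    positivity
  set s : ℝ := Real.sqrt D with hsdef
  have hs0 : 0 ≤ s := Real.sqrt_nonneg _
  have hs2 : s ^ 2 = D := Real.sq_sqrt hD
  have hE : s ^ 2 * (qh0 ^ 2 * (4 * qh0 - ql0) ^ 2) =
      qh ^ 4 * (4 * qh0 - ql0) ^ 2 - 12 * (qh0 - ql0) * qh ^ 3 * qh0 ^ 2 := by
    rw [hs2, hDeq]
    field_simp
  have hc : ((4 - ql0 / qh0) ^ 2 / (2 * (1 - ql0 / qh0))) * (qh ^ 2 / qh0 - s) =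
      ((4 * qh0 - ql0) ^ 2 * (qh ^ 2 - qh0 * s)) / (2 * qh0 ^ 2 * (qh0 - ql0)) := by
    have h1 : (1 : ℝ) - ql0 / qh0 = (qh0 - ql0) / qh0 := by field_simp
    field_simp
  rw [hc] at hq
  have hq' : ((4 * qh0 - ql0) ^ 2 * (qh ^ 2 - qh0 * s)) / (2 * qh0 ^ 2 * (qh0 - ql0)) ≤
      4 * qh - ql := by linarith
  rw [div_le_iff₀ hM] at hq'
  have hA : 0 ≤ (4 * qh - ql) * (2 * qh0 ^ 2 * (qh0 - ql0)) -
      (4 * qh0 - ql0) ^ 2 * (qh ^ 2 - qh0 * s) := by linarith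
  have hBm : 0 ≤ (4 * qh0 - ql0) ^ 2 * (qh ^ 2 + qh0 * s) -
      (4 * qh - ql) * (2 * qh0 ^ 2 * (qh0 - ql0)) := by
    nlinarith [mul_nonneg (mul_nonneg hb.le hs0) (sq_nonneg (4 * qh0 - ql0)),
      mul_nonneg hql hM.le,
      mul_nonneg (sub_nonneg.2 hh) (sq_nonneg (4 * qh0 - ql0)),
      mul_nonneg (mul_nonneg hqh.le (sub_nonneg.2 hh)) (sq_nonneg (4 * qh0 - ql0)),
      mul_nonneg (mul_nonneg hqh.le hb.le) (sq_nonneg ql0),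
      mul_pos (mul_pos hqh hb) (mul_pos hb hb)]
  have hGid : (4 * qh ^ 2 * (qh - ql) * (4 * qh0 - ql0) ^ 2 -
        4 * qh0 ^ 2 * (qh0 - ql0) * (4 * qh - ql) ^ 2) * (2 * qh0 ^ 2 * (qh0 - ql0)) ^ 2 =
      4 * qh0 ^ 2 * (qh0 - ql0) *
        (((4 * qh - ql) * (2 * qh0 ^ 2 * (qh0 - ql0)) -
            (4 * qh0 - ql0) ^ 2 * (qh ^ 2 - qh0 * s)) *
          ((4 * qh0 - ql0) ^ 2 * (qh ^ 2 + qh0 * s) -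
            (4 * qh - ql) * (2 * qh0 ^ 2 * (qh0 - ql0)))) := by
    linear_combination (-2 * (2 * qh0 ^ 2 * (qh0 - ql0)) * (4 * qh0 - ql0) ^ 2) * hE
  have hG : 0 ≤ 4 * qh ^ 2 * (qh - ql) * (4 * qh0 - ql0) ^ 2 -
      4 * qh0 ^ 2 * (qh0 - ql0) * (4 * qh - ql) ^ 2 := by
    have hprod : 0 ≤ 4 * qh0 ^ 2 * (qh0 - ql0) *
        (((4 * qh - ql) * (2 * qh0 ^ 2 * (qh0 - ql0)) -
            (4 * qh0 - ql0) ^ 2 * (qh ^ 2 - qh0 * s)) *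
          ((4 * qh0 - ql0) ^ 2 * (qh ^ 2 + qh0 * s) -
            (4 * qh - ql) * (2 * qh0 ^ 2 * (qh0 - ql0)))) := by
      have : (0:ℝ) < 4 * qh0 ^ 2 * (qh0 - ql0) := by positivity
      exact mul_nonneg this.le (mul_nonneg hA hBm)
    have hM2 : (0:ℝ) < (2 * qh0 ^ 2 * (qh0 - ql0)) ^ 2 := by positivity
    have h00 : 0 * (2 * qh0 ^ 2 * (qh0 - ql0)) ^ 2 ≤
        (4 * qh ^ 2 * (qh - ql) * (4 * qh0 - ql0) ^ 2 -
          4 * qh0 ^ 2 * (qh0 - ql0) * (4 * qh - ql) ^ 2) *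
          (2 * qh0 ^ 2 * (qh0 - ql0)) ^ 2 := by
      rw [hGid]; linarith
    exact le_of_mul_le_mul_right h00 hM2
  have h4 : 0 < 4 * qh - ql := by linarith
  unfold Uh
  rw [ge_iff_le, div_le_div_iff₀ (by positivity) (by positivity)]
  linarith [hG]
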